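/- Every accumulation point φ* of the sequence {φ_k} generated by the projected gradient method φ_{k+1} = φ_k + β_k v_k, with v_k = P_U(φ_k − λ∇j(φ_k)) − φ_k and β_k chosen by the Armijo step length rule, is first-order critical, i.e., satisfies j'(φ*)(ψ − φ*) ≥ 0 for all ψ ∈ U. -/

import Mathlib

open RealInnerProductSpace Filter Topology

lemma proj_lip {H : Type*} [NormedAddCommGroup H] [InnerProductSpace ℝ H]
    (U : Set H) (P : H → H)
    (hP : ∀ x : H, P x ∈ U ∧ ∀ ψ ∈ U, ⟪x - P x, ψ - P x⟫ ≤ 0) :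
    ∀ x y : H, ‖P x - P y‖ ≤ ‖x - y‖ := by
  intro x y
  set w := P x - P y with hw
  have h1 : ⟪x - P x, P y - P x⟫ ≤ 0 := (hP x).2 (P y) (hP y).1
  have h2 : ⟪y - P y, P x - P y⟫ ≤ 0 := (hP y).2 (P x) (hP x).1
  have key : ‖w‖ ^ 2 ≤ ⟪x - y, w⟫ := by
    have e : ⟪w, w⟫ = ⟪x - y, w⟫ + ⟪x - P x, P y - P x⟫ + ⟪y - P y, P x - P y⟫ := by
      simp only [hw, inner_sub_left, inner_sub_right]
      ring
    rw [real_inner_self_eq_norm_sq] at e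
    linarith
  rcases eq_or_ne w 0 with h0 | h0
  · have hz : ‖P x - P y‖ = 0 := by rw [← hw, h0, norm_zero]
    rw [hz]
    positivity
  · have hwpos : 0 < ‖w‖ := norm_pos_iff.mpr h0
    have := real_inner_le_norm (x - y) w
    nlinarith

lemma g_cont {H : Type*} [NormedAddCommGroup H] [InnerProductSpace ℝ H]
    (j' : H → H →L[ℝ] ℝ) (hcont : Continuous j') (g : H → H)
    (hg : ∀ x w : H, j' x w = ⟪g x, w⟫) : Continuous g := by
  have hb : ∀ x y : H, ‖g x - g y‖ ≤ ‖j' x - j' y‖ := by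
    intro x y
    rcases eq_or_ne (g x - g y) 0 with h0 | h0
    · rw [h0, norm_zero]; positivity
    · have hpos : 0 < ‖g x - g y‖ := norm_pos_iff.mpr h0
      have e : ‖g x - g y‖ ^ 2 = (j' x - j' y) (g x - g y) := by
        rw [ContinuousLinearMap.sub_apply, hg, hg, ← inner_sub_left,
          real_inner_self_eq_norm_sq]
      have hle := ContinuousLinearMap.le_opNorm (j' x - j' y) (g x - g y)
      rw [Real.norm_eq_abs] at hle
      have := le_abs_self ((j' x - j' y) (g x - g y))
      nlinarith
  rw [continuous_iff_continuousAt]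
  intro x₀
  rw [ContinuousAt, tendsto_iff_norm_sub_tendsto_zero]
  apply squeeze_zero (fun x => norm_nonneg _) (fun x => hb x x₀)
  have h := hcont.tendsto x₀
  rw [tendsto_iff_norm_sub_tendsto_zero] at h
  exact h

/-- Global convergence of the projected gradient method with Armijo line search
(Theorem 5.2): every accumulation point `φ*` of the iterates
`φ_{k+1} = φ_k + β_k v_k`, `v_k = P_U(φ_k - λ ∇j(φ_k)) - φ_k`, with `β_k = σ^{m_k}`
determined by the Armijo rule, is first-order critical, i.e. satisfies
`j'(φ*)(ψ - φ*) ≥ 0` for all `ψ ∈ U`. -/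
theorem projected_gradient_armijo_accumulation_critical
    {H : Type*} [NormedAddCommGroup H] [InnerProductSpace ℝ H] [CompleteSpace H]
    (U : Set H) (hne : U.Nonempty) (hclosed : IsClosed U) (hconv : Convex ℝ U)
    (P : H → H)
    -- `P` is the metric projection onto `U`
    (hP : ∀ x : H, P x ∈ U ∧ ∀ ψ ∈ U, ⟪x - P x, ψ - P x⟫ ≤ 0)
    (j : H → ℝ) (j' : H → H →L[ℝ] ℝ)
    (hdiff : ∀ x : H, HasFDerivAt j (j' x) x)
    (hcont : Continuous j')  -- `j` is continuously Fréchet differentiable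
    (g : H → H) (hg : ∀ x w : H, j' x w = ⟪g x, w⟫)  -- `g x = ∇j(x)`
    (lam : ℝ) (hlam : 0 < lam)
    (σ c : ℝ) (hσ : σ ∈ Set.Ioo (0:ℝ) 1) (hc : c ∈ Set.Ioo (0:ℝ) 1)
    (φ : ℕ → H) (v : ℕ → H) (m : ℕ → ℕ)
    (hφ0 : φ 0 ∈ U)
    (hv : ∀ k, v k = P (φ k - lam • g (φ k)) - φ k)
    -- Armijo rule: `m k` is the smallest nonnegative integer satisfying the decrease test
    (harmijo : ∀ k, j (φ k + σ ^ (m k) • v k) - j (φ k) ≤ c * σ ^ (m k) * j' (φ k) (v k))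
    (hmin : ∀ k, ∀ n < m k, ¬ (j (φ k + σ ^ n • v k) - j (φ k) ≤ c * σ ^ n * j' (φ k) (v k)))
    (hstep : ∀ k, φ (k + 1) = φ k + σ ^ (m k) • v k)
    -- `φ*` is an accumulation point of the sequence of iterates
    (φstar : H) (ψidx : ℕ → ℕ) (hψ : StrictMono ψidx)
    (hacc : Tendsto (fun k => φ (ψidx k)) atTop (𝓝 φstar)) :
    ∀ ψ ∈ U, 0 ≤ j' φstar (ψ - φstar) := by
  obtain ⟨hσ0, hσ1⟩ := hσ
  obtain ⟨hc0, hc1⟩ := hc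
  have hgcont : Continuous g := g_cont j' hcont g hg
  have hPlip := proj_lip U P hP
  have hPcont : Continuous P := by
    rw [continuous_iff_continuousAt]
    intro x₀
    rw [ContinuousAt, tendsto_iff_norm_sub_tendsto_zero]
    apply squeeze_zero (fun x => norm_nonneg _) (fun x => hPlip x x₀)
    have h : Tendsto (fun x : H => x - x₀) (𝓝 x₀) (𝓝 (x₀ - x₀)) :=
      tendsto_id.sub tendsto_const_nhds
    rw [sub_self] at h
    simpa using h.norm
  have hjcont : Continuous j := by
    rw [continuous_iff_continuousAt]; exact fun x => (hdiff x).continuousAt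
  set V : H → H := fun x => P (x - lam • g x) - x with hVdef
  have hVcont : Continuous V :=
    (hPcont.comp (continuous_id.sub (continuous_const.smul hgcont))).sub continuous_id
  have hvV : ∀ k, v k = V (φ k) := fun k => hv k
  have hβpos : ∀ n : ℕ, (0:ℝ) < σ ^ n := fun n => pow_pos hσ0 n
  have hβle1 : ∀ n : ℕ, σ ^ n ≤ 1 := fun n => pow_le_one₀ hσ0.le hσ1.le
  have hmem : ∀ k, φ k ∈ U := by
    intro k
    induction k with
    | zero => exact hφ0
    | succ k ih =>
      rw [hstep k, hv k]
      have h1 : φ k + σ ^ m k • (P (φ k - lam • g (φ k)) - φ k)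
          = (1 - σ ^ m k) • φ k + σ ^ m k • P (φ k - lam • g (φ k)) := by module
      rw [h1]
      exact hconv ih (hP _).1 (by linarith [hβle1 (m k)]) (hβpos (m k)).le (by ring)
  have hkey : ∀ x ∈ U, lam * ⟪g x, V x⟫ + ‖V x‖ ^ 2 ≤ 0 := by
    intro x hx
    have h := (hP (x - lam • g x)).2 x hx
    have e : ⟪x - lam • g x - P (x - lam • g x), x - P (x - lam • g x)⟫
        = lam * ⟪g x, V x⟫ + ‖V x‖ ^ 2 := by
      have e1 : x - lam • g x - P (x - lam • g x) = -(lam • g x) - V x := by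
        simp only [hVdef]; abel
      have e2 : x - P (x - lam • g x) = -V x := by
        simp only [hVdef]; abel
      rw [e1, e2]
      simp only [inner_sub_left, inner_neg_left, inner_neg_right, real_inner_smul_left]
      rw [real_inner_self_eq_norm_sq]
      ring
    rw [e] at h
    exact h
  have hjv : ∀ k, j' (φ k) (v k) = ⟪g (φ k), v k⟫ := fun k => hg _ _
  have hBle : ∀ k, (c / lam) * (σ ^ m k * ‖v k‖ ^ 2) ≤ j (φ k) - j (φ (k + 1)) := by
    intro k
    have harm := harmijo k
    have hk := hkey (φ k) (hmem k)
    rw [← hvV k] at hk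
    have h1 : j' (φ k) (v k) ≤ -(‖v k‖ ^ 2) / lam := by
      rw [hjv k, le_div_iff₀ hlam]
      linarith
    have h2 : c * σ ^ m k * j' (φ k) (v k) ≤ c * σ ^ m k * (-(‖v k‖ ^ 2) / lam) :=
      mul_le_mul_of_nonneg_left h1 (by positivity)
    have e : c * σ ^ m k * (-(‖v k‖ ^ 2) / lam) = -((c / lam) * (σ ^ m k * ‖v k‖ ^ 2)) := by
      ring
    rw [e] at h2
    rw [hstep k]
    linarith
  have hmono' : ∀ k, j (φ (k + 1)) ≤ j (φ k) := by
    intro k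
    have h := hBle k
    have hnn : 0 ≤ (c / lam) * (σ ^ m k * ‖v k‖ ^ 2) := by positivity
    linarith
  have hanti : Antitone (fun k => j (φ k)) := antitone_nat_of_succ_le hmono'
  have hsubJ : Tendsto (fun k => j (φ (ψidx k))) atTop (𝓝 (j φstar)) :=
    (hjcont.tendsto φstar).comp hacc
  have hsubanti : Antitone (fun k => j (φ (ψidx k))) := hanti.comp_monotone hψ.monotone
  have hlb : ∀ n, j φstar ≤ j (φ n) := by
    intro n
    exact (hsubanti.le_of_tendsto hsubJ n).trans (hanti hψ.le_apply)
  have hJlim : Tendsto (fun k => j (φ k)) atTop (𝓝 (j φstar)) := by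
    have hbdd : BddBelow (Set.range fun k => j (φ k)) :=
      ⟨j φstar, by rintro x ⟨n, rfl⟩; exact hlb n⟩
    have h1 := tendsto_atTop_ciInf hanti hbdd
    have h2 : Tendsto (fun k => j (φ (ψidx k))) atTop (𝓝 (⨅ n, j (φ n))) :=
      h1.comp hψ.tendsto_atTop
    rwa [tendsto_nhds_unique h2 hsubJ] at h1
  have hdiff0 : Tendsto (fun k => j (φ k) - j (φ (k + 1))) atTop (𝓝 0) := by
    have h2 : Tendsto (fun k => j (φ (k + 1))) atTop (𝓝 (j φstar)) :=
      hJlim.comp (tendsto_add_atTop_nat 1)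
    simpa using hJlim.sub h2
  have hB0 : Tendsto (fun k => σ ^ m k * ‖v k‖ ^ 2) atTop (𝓝 0) := by
    have h1 : Tendsto (fun k => (c / lam) * (σ ^ m k * ‖v k‖ ^ 2)) atTop (𝓝 0) :=
      squeeze_zero (fun k => by positivity) (fun k => hBle k) hdiff0
    have h2 := h1.const_mul (lam / c)
    rw [mul_zero] at h2
    refine h2.congr fun k => ?_
    field_simp
  have hmvt : ∀ k, 1 ≤ m k → ∃ θ : ℝ, θ ∈ Set.Ioo (0:ℝ) (σ ^ (m k - 1)) ∧
      c * ⟪g (φ k), v k⟫ < ⟪g (φ k + θ • v k), v k⟫ := by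
    intro k hk1
    have hlt : m k - 1 < m k := Nat.sub_lt hk1 Nat.one_pos
    have hfail := hmin k (m k - 1) hlt
    push_neg at hfail
    set t := σ ^ (m k - 1) with htdef
    have ht : (0:ℝ) < t := hβpos _
    have hder : ∀ s : ℝ, HasDerivAt (fun t : ℝ => j (φ k + t • v k))
        (⟪g (φ k + s • v k), v k⟫) s := by
      intro s
      have h1 : HasDerivAt (fun t : ℝ => φ k + t • v k) (v k) s := by
        simpa using ((hasDerivAt_id s).smul_const (v k)).const_add (φ k)
      have h2 := (hdiff (φ k + s • v k)).comp_hasDerivAt s h1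
      rw [hg] at h2
      exact h2
    obtain ⟨θ, hθmem, heq⟩ := exists_hasDerivAt_eq_slope (fun t => j (φ k + t • v k))
      (fun s => ⟪g (φ k + s • v k), v k⟫) ht
      (fun s _ => (hder s).continuousAt.continuousWithinAt) (fun s _ => hder s)
    refine ⟨θ, hθmem, ?_⟩
    have heq' : ⟪g (φ k + θ • v k), v k⟫
        = (j (φ k + t • v k) - j (φ k + (0:ℝ) • v k)) / (t - 0) := heq
    have e0 : φ k + (0:ℝ) • v k = φ k := by simp
    rw [heq', e0, sub_zero, lt_div_iff₀ ht]
    rw [hg] at hfail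
    have e1 : c * ⟪g (φ k), v k⟫ * t = c * t * ⟪g (φ k), v k⟫ := by ring
    rw [e1]
    exact hfail
  choose! θf hθf1 hθf2 using hmvt
  have hVstar : V φstar = 0 := by
    by_contra hne0
    have hφstarU : φstar ∈ U :=
      hclosed.mem_of_tendsto hacc (Eventually.of_forall fun k => hmem _)
    have hvlim : Tendsto (fun k => v (ψidx k)) atTop (𝓝 (V φstar)) := by
      have h := (hVcont.tendsto φstar).comp hacc
      exact h.congr fun k => (hvV _).symm
    have hnlim : Tendsto (fun k => ‖v (ψidx k)‖ ^ 2) atTop (𝓝 (‖V φstar‖ ^ 2)) :=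
      hvlim.norm.pow 2
    have hεpos : 0 < ‖V φstar‖ ^ 2 := pow_pos (norm_pos_iff.mpr hne0) 2
    have hBsub : Tendsto (fun k => σ ^ m (ψidx k) * ‖v (ψidx k)‖ ^ 2) atTop (𝓝 0) :=
      hB0.comp hψ.tendsto_atTop
    have hβ0 : Tendsto (fun k => σ ^ m (ψidx k)) atTop (𝓝 0) := by
      have hdiv := hBsub.div hnlim hεpos.ne'
      rw [zero_div] at hdiv
      apply hdiv.congr'
      filter_upwards [hnlim.eventually_ne hεpos.ne'] with k hk
      simp only [Pi.div_apply]
      rw [mul_div_assoc, div_self hk, mul_one]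
    have hm1 : ∀ᶠ k in atTop, 1 ≤ m (ψidx k) := by
      filter_upwards [hβ0.eventually_lt_const one_pos] with k hk
      by_contra h
      push_neg at h
      have h0 : m (ψidx k) = 0 := by omega
      rw [h0] at hk
      simp at hk
    have hσinv : Tendsto (fun k => σ ^ m (ψidx k) / σ) atTop (𝓝 0) := by
      simpa using hβ0.div_const σ
    have hub : ∀ᶠ k in atTop, θf (ψidx k) ≤ σ ^ m (ψidx k) / σ := by
      filter_upwards [hm1] with k hk
      have h := (hθf1 _ hk).2
      have e : σ ^ (m (ψidx k) - 1) = σ ^ m (ψidx k) / σ := by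
        rw [eq_div_iff hσ0.ne', ← pow_succ]
        congr 1
        omega
      rw [← e]
      exact h.le
    have hlb' : ∀ᶠ k in atTop, (0:ℝ) ≤ θf (ψidx k) := by
      filter_upwards [hm1] with k hk
      exact (hθf1 _ hk).1.le
    have hθ0 : Tendsto (fun k => θf (ψidx k)) atTop (𝓝 0) :=
      tendsto_of_tendsto_of_tendsto_of_le_of_le' tendsto_const_nhds hσinv hlb' hub
    have hx : Tendsto (fun k => φ (ψidx k) + θf (ψidx k) • v (ψidx k)) atTop (𝓝 φstar) := by
      have h := hacc.add (hθ0.smul hvlim)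
      simpa using h
    have hL1 : Tendsto (fun k => ⟪g (φ (ψidx k) + θf (ψidx k) • v (ψidx k)), v (ψidx k)⟫)
        atTop (𝓝 (⟪g φstar, V φstar⟫)) := ((hgcont.tendsto φstar).comp hx).inner hvlim
    have hL2 : Tendsto (fun k => c * ⟪g (φ (ψidx k)), v (ψidx k)⟫) atTop
        (𝓝 (c * ⟪g φstar, V φstar⟫)) :=
      (((hgcont.tendsto φstar).comp hacc).inner hvlim).const_mul c
    have hle : c * ⟪g φstar, V φstar⟫ ≤ ⟪g φstar, V φstar⟫ := by
      refine le_of_tendsto_of_tendsto hL2 hL1 ?_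
      filter_upwards [hm1] with k hk
      exact (hθf2 _ hk).le
    have hXneg : ⟪g φstar, V φstar⟫ < 0 := by
      have h := hkey φstar hφstarU
      by_contra hge
      push_neg at hge
      nlinarith
    nlinarith [mul_pos (sub_pos.mpr hc1) (neg_pos.mpr hXneg)]
  intro ψ hψU
  have h0 : P (φstar - lam • g φstar) - φstar = 0 := hVstar
  have hPeq : P (φstar - lam • g φstar) = φstar := sub_eq_zero.mp h0
  have h := (hP (φstar - lam • g φstar)).2 ψ hψU
  rw [hPeq] at h
  have e : φstar - lam • g φstar - φstar = -(lam • g φstar) := by abel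
  rw [e, inner_neg_left, real_inner_smul_left] at h
  rw [hg]
  by_contra hlt
  push_neg at hlt
  nlinarith [mul_pos hlam (neg_pos.mpr hlt)]
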